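/- Let s ∈ (0,1), a = 1−2s, and let w be a C³ function on an open subset of {x ∈ ℝ^{n+1} : x_{n+1} > 0} satisfying ∇·(x_{n+1}^{a} ∇w) = x_{n+1}^{a} f with f ∈ C¹. Then the conjugate function w̄ := x_{n+1}^{a} ∂_{n+1} w satisfies ∇·(x_{n+1}^{−a} ∇w̄) = ∂_{n+1} f on the same set. -/

import Mathlib

open Real

/-- The `i`-th partial derivative of a function on `ℝ^{n+1}`. -/
noncomputable def pd {m : ℕ} (i : Fin m) (u : (Fin m → ℝ) → ℝ) (x : Fin m → ℝ) : ℝ :=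
  deriv (fun t => u (Function.update x i t)) (x i)

/-- The weighted operator `∇·(x_{n+1}^{b} ∇u)` on `ℝ^{n+1}`. -/
noncomputable def Lb (n : ℕ) (b : ℝ) (u : (Fin (n + 1) → ℝ) → ℝ)
    (x : Fin (n + 1) → ℝ) : ℝ :=
  ∑ i, pd i (fun y => y (Fin.last n) ^ b * pd i u y) x

section helpers

variable {m : ℕ} {i j : Fin m} {u v g : (Fin m → ℝ) → ℝ} {x : Fin m → ℝ}

lemma hasDerivAt_pd (h : DifferentiableAt ℝ u x) :
    HasDerivAt (fun t => u (Function.update x i t)) (fderiv ℝ u x (Pi.single i 1)) (x i) := by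
  have h' : HasFDerivAt u (fderiv ℝ u x) (Function.update x i (x i)) := by
    rw [Function.update_eq_self]; exact h.hasFDerivAt
  exact h'.comp_hasDerivAt (x i) (hasDerivAt_update x i (x i))

lemma pd_eq_fderiv (h : DifferentiableAt ℝ u x) :
    pd i u x = fderiv ℝ u x (Pi.single i 1) := (hasDerivAt_pd h).deriv

lemma hasDerivAt_pd' (h : DifferentiableAt ℝ u x) :
    HasDerivAt (fun t => u (Function.update x i t)) (pd i u x) (x i) := by
  rw [pd_eq_fderiv h]; exact hasDerivAt_pd h

lemma pd_congr_line (h : ∀ t, u (Function.update x i t) = v (Function.update x i t)) :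
    pd i u x = pd i v x := by
  unfold pd; congr 1; funext t; exact h t

lemma pd_congr_nhds (h : u =ᶠ[nhds x] v) : pd i u x = pd i v x := by
  unfold pd
  apply Filter.EventuallyEq.deriv_eq
  have hc : ContinuousAt (fun t : ℝ => Function.update x i t) (x i) :=
    (hasDerivAt_update x i (x i)).continuousAt
  have ht : Filter.Tendsto (fun t : ℝ => Function.update x i t) (nhds (x i)) (nhds x) := by
    have := hc.tendsto
    rwa [Function.update_eq_self] at this
  exact ht.eventually h

lemma pd_const_mul (c : ℝ) : pd i (fun y => c * u y) x = c * pd i u x := by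
  unfold pd; exact deriv_const_mul_field c

end helpers
section helpers2

variable {m : ℕ} {i j k : Fin m} {b : ℝ} {u v g : (Fin m → ℝ) → ℝ} {x : Fin m → ℝ}
  {U : Set (Fin m → ℝ)}

lemma pd_rpow_mul_ne (hik : i ≠ k) :
    pd i (fun y => y k ^ b * g y) x = x k ^ b * pd i g x := by
  rw [pd_congr_line (v := fun y => x k ^ b * g y) ?_, pd_const_mul]
  intro t
  rw [Function.update_of_ne (Ne.symm hik)]

lemma pd_rpow_mul_self (hx : x k ≠ 0) (h : DifferentiableAt ℝ g x) :
    pd k (fun y => y k ^ b * g y) x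
      = b * x k ^ (b - 1) * g x + x k ^ b * pd k g x := by
  have h1 : HasDerivAt (fun t : ℝ => t ^ b) (b * x k ^ (b - 1)) (x k) :=
    Real.hasDerivAt_rpow_const (Or.inl hx)
  have h2 := hasDerivAt_pd' (i := k) h
  have h3 : HasDerivAt (fun t => (Function.update x k t) k ^ b * g (Function.update x k t))
      (b * x k ^ (b - 1) * g x + x k ^ b * pd k g x) (x k) := by
    have := h1.mul h2
    simp only [Function.update_self] at this ⊢
    rw [Function.update_eq_self] at this
    exact this
  exact h3.deriv

lemma pd_sub (hu : DifferentiableAt ℝ u x) (hv : DifferentiableAt ℝ v x) :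
    pd i (fun y => u y - v y) x = pd i u x - pd i v x :=
  ((hasDerivAt_pd' hu).sub (hasDerivAt_pd' hv)).deriv

lemma pd_sum {ι : Type*} (S : Finset ι) (F : ι → (Fin m → ℝ) → ℝ)
    (h : ∀ j ∈ S, DifferentiableAt ℝ (F j) x) :
    pd i (fun y => ∑ j ∈ S, F j y) x = ∑ j ∈ S, pd i (F j) x :=
  (HasDerivAt.fun_sum fun j hj => hasDerivAt_pd' (h j hj)).deriv

lemma pd_eventuallyEq_fderiv (hU : IsOpen U) (hu : DifferentiableOn ℝ u U) (hx : x ∈ U) :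
    pd i u =ᶠ[nhds x] fun z => fderiv ℝ u z (Pi.single i 1) := by
  filter_upwards [hU.mem_nhds hx] with z hz
  exact pd_eq_fderiv ((hu z hz).differentiableAt (hU.mem_nhds hz))

lemma pd_pd_eq_sndFDeriv (hU : IsOpen U) (hu : ContDiffOn ℝ 2 u U) (hx : x ∈ U) :
    pd i (pd j u) x
      = fderiv ℝ (fderiv ℝ u) x (Pi.single i 1) (Pi.single j 1) := by
  have hdiff : DifferentiableOn ℝ u U := hu.differentiableOn (by norm_num)
  have hf' : ContDiffOn ℝ 1 (fderiv ℝ u) U := hu.fderiv_of_isOpen hU (by norm_num)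
  have hfd : HasFDerivAt (fderiv ℝ u) (fderiv ℝ (fderiv ℝ u) x) x :=
    (((hf'.differentiableOn one_ne_zero) x hx).differentiableAt (hU.mem_nhds hx)).hasFDerivAt
  have hD : HasFDerivAt (fun z => fderiv ℝ u z (Pi.single j 1))
      ((fderiv ℝ (fderiv ℝ u) x).flip (Pi.single j 1)) x := by
    have := hfd.clm_apply (hasFDerivAt_const (Pi.single j 1 : Fin m → ℝ) x)
    simpa using this
  rw [pd_congr_nhds (pd_eventuallyEq_fderiv hU hdiff hx),
    pd_eq_fderiv hD.differentiableAt, hD.fderiv]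
  rfl

lemma pd_comm (hU : IsOpen U) (hu : ContDiffOn ℝ 2 u U) (hx : x ∈ U) :
    pd i (pd j u) x = pd j (pd i u) x := by
  rw [pd_pd_eq_sndFDeriv hU hu hx, pd_pd_eq_sndFDeriv hU hu hx]
  exact (hu.contDiffAt (hU.mem_nhds hx)).isSymmSndFDerivAt (by simp [minSmoothness_of_isRCLikeNormedField]) _ _

end helpers2
section helpers3

variable {m : ℕ} {i : Fin m} {u : (Fin m → ℝ) → ℝ} {U : Set (Fin m → ℝ)}

lemma pd_contDiffOn (hU : IsOpen U) {k : WithTop ℕ∞} (hu : ContDiffOn ℝ (k + 1) u U) :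
    ContDiffOn ℝ k (pd i u) U := by
  have h1 : ContDiffOn ℝ k (fun z => fderiv ℝ u z (Pi.single i 1)) U :=
    (hu.fderiv_of_isOpen hU le_rfl).clm_apply contDiffOn_const
  refine h1.congr fun z hz => ?_
  have hd : DifferentiableAt ℝ u z :=
    ((hu.differentiableOn (by simp)) z hz).differentiableAt (hU.mem_nhds hz)
  exact pd_eq_fderiv hd

end helpers3

/-- Conjugation: if `∇·(x_{n+1}^{a}∇w) = x_{n+1}^{a} f` with `a = 1-2s` on an open subset of
the upper half-space, then `w̄ := x_{n+1}^{a} ∂_{n+1} w` satisfies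
`∇·(x_{n+1}^{-a}∇w̄) = ∂_{n+1} f` there. -/
theorem stmt7 (n : ℕ) (s : ℝ) (hs : s ∈ Set.Ioo (0 : ℝ) 1)
    (U : Set (Fin (n + 1) → ℝ)) (hU : IsOpen U)
    (hUsub : U ⊆ {x | 0 < x (Fin.last n)})
    (w f : (Fin (n + 1) → ℝ) → ℝ)
    (hw : ContDiffOn ℝ 3 w U) (hf : ContDiffOn ℝ 1 f U)
    (heq : ∀ x ∈ U, Lb n (1 - 2 * s) w x = x (Fin.last n) ^ (1 - 2 * s) * f x) :
    ∀ x ∈ U,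
      Lb n (2 * s - 1)
          (fun y => y (Fin.last n) ^ (1 - 2 * s) * pd (Fin.last n) w y) x
        = pd (Fin.last n) f x := by
  intro x hx
  set ℓ : Fin (n + 1) := Fin.last n with hℓ
  set a : ℝ := 1 - 2 * s with ha
  have hxl : 0 < x ℓ := hUsub hx
  -- smoothness bookkeeping
  have hw2 : ContDiffOn ℝ 2 w U := hw.of_le (by norm_num)
  have hw21 : ContDiffOn ℝ ((2 : WithTop ℕ∞) + 1) w U := hw.of_le (by norm_num)
  have hpdw : ∀ i : Fin (n + 1), ContDiffOn ℝ 2 (pd i w) U :=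
    fun i => pd_contDiffOn hU hw21
  have hpdw11 : ∀ i : Fin (n + 1), ContDiffOn ℝ ((1 : WithTop ℕ∞) + 1) (pd i w) U :=
    fun i => (hpdw i).of_le (by norm_num)
  have hpdpdw : ∀ i j : Fin (n + 1), ContDiffOn ℝ 1 (pd i (pd j w)) U :=
    fun i j => pd_contDiffOn hU (hpdw11 j)
  have hdiffpdw : ∀ (i : Fin (n + 1)) (y : Fin (n+1) → ℝ), y ∈ U →
      DifferentiableAt ℝ (pd i w) y := fun i y hy =>
    ((hpdw i).contDiffAt (hU.mem_nhds hy)).differentiableAt (by norm_num)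
  have hdiffpdpdw : ∀ (i j : Fin (n + 1)) (y : Fin (n+1) → ℝ), y ∈ U →
      DifferentiableAt ℝ (pd i (pd j w)) y := fun i j y hy =>
    ((hpdpdw i j).contDiffAt (hU.mem_nhds hy)).differentiableAt one_ne_zero
  set wb : (Fin (n + 1) → ℝ) → ℝ := fun y => y ℓ ^ a * pd ℓ w y with hwb
  -- Key identity: on U, pd ℓ wb = y ℓ ^ a * (f - Δ' w)
  have keyE : ∀ y ∈ U, pd ℓ wb y
      = y ℓ ^ a * (f y - ∑ j : Fin n, pd j.castSucc (pd j.castSucc w) y) := by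
    intro y hy
    have hyl : 0 < y ℓ := hUsub hy
    have h6 : pd ℓ wb y
        = a * y ℓ ^ (a - 1) * pd ℓ w y + y ℓ ^ a * pd ℓ (pd ℓ w) y :=
      pd_rpow_mul_self hyl.ne' (hdiffpdw ℓ y hy)
    have hEq := heq y hy
    unfold Lb at hEq
    rw [Fin.sum_univ_castSucc] at hEq
    have hT : ∀ j : Fin n,
        pd j.castSucc (fun z => z ℓ ^ a * pd j.castSucc w z) y
          = y ℓ ^ a * pd j.castSucc (pd j.castSucc w) y :=
      fun j => pd_rpow_mul_ne (Fin.castSucc_lt_last j).ne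
    rw [Finset.sum_congr rfl (fun j _ => hT j),
      pd_rpow_mul_self hyl.ne' (hdiffpdw ℓ y hy), ← Finset.mul_sum] at hEq
    rw [h6, mul_sub]
    linarith
  -- Now compute the left-hand side
  show Lb n (2 * s - 1) wb x = pd ℓ f x
  have hna : (2 : ℝ) * s - 1 = -a := by rw [ha]; ring
  unfold Lb
  rw [Fin.sum_univ_castSucc]
  -- tangential terms
  have hTang : ∀ j : Fin n,
      pd j.castSucc (fun y => y ℓ ^ (2 * s - 1) * pd j.castSucc wb y) x
        = pd ℓ (pd j.castSucc (pd j.castSucc w)) x := by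
    intro j
    have hne : j.castSucc ≠ ℓ := (Fin.castSucc_lt_last j).ne
    rw [pd_rpow_mul_ne hne]
    have hinner : pd j.castSucc wb = fun y => y ℓ ^ a * pd j.castSucc (pd ℓ w) y :=
      funext fun y => pd_rpow_mul_ne hne
    rw [hinner, pd_rpow_mul_ne hne]
    -- symmetry steps
    have hswap1 : pd j.castSucc (pd j.castSucc (pd ℓ w)) x
        = pd j.castSucc (pd ℓ (pd j.castSucc w)) x := by
      apply pd_congr_nhds
      filter_upwards [hU.mem_nhds hx] with z hz
      exact pd_comm hU hw2 hz
    have hswap2 : pd j.castSucc (pd ℓ (pd j.castSucc w)) x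
        = pd ℓ (pd j.castSucc (pd j.castSucc w)) x :=
      pd_comm hU (hpdw j.castSucc) hx
    rw [hswap1, hswap2, hna, ← mul_assoc, ← Real.rpow_add hxl, neg_add_cancel,
      Real.rpow_zero, one_mul]
  rw [Finset.sum_congr rfl (fun j _ => hTang j)]
  -- last term
  have hlast : pd ℓ (fun y => y ℓ ^ (2 * s - 1) * pd ℓ wb y) x
      = pd ℓ f x - ∑ j : Fin n, pd ℓ (pd j.castSucc (pd j.castSucc w)) x := by
    have hev : (fun y => y ℓ ^ (2 * s - 1) * pd ℓ wb y)
        =ᶠ[nhds x] fun y => f y - ∑ j : Fin n, pd j.castSucc (pd j.castSucc w) y := by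
      filter_upwards [hU.mem_nhds hx] with y hy
      have hyl : 0 < y ℓ := hUsub hy
      rw [keyE y hy, hna, ← mul_assoc, ← Real.rpow_add hyl, neg_add_cancel,
        Real.rpow_zero, one_mul]
    rw [pd_congr_nhds hev]
    have hfd : DifferentiableAt ℝ f x :=
      (hf.contDiffAt (hU.mem_nhds hx)).differentiableAt one_ne_zero
    have hsd : DifferentiableAt ℝ
        (fun y => ∑ j : Fin n, pd j.castSucc (pd j.castSucc w) y) x :=
      DifferentiableAt.fun_sum fun j _ => hdiffpdpdw j.castSucc j.castSucc x hx
    rw [pd_sub hfd hsd, pd_sum Finset.univ _ (fun j _ => hdiffpdpdw j.castSucc j.castSucc x hx)]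
  rw [hlast]
  ring
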